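/- Double ascents are not a valid structure type: the double ascent 13245 restricted to its top three values is order-isomorphic to the bottom three values of the double ascent 12453 (both isomorphic to 123), but the unique permutation on 7 points combining them on this overlap of 3 points is 1324675, which contains two consecutive inversions and hence is not a double ascent. -/

import Mathlib

/-- The number of consecutive inversions (descents) of a sequence. -/
def descents (s : List ℕ) : ℕ :=
  (s.zip s.tail).countP fun p => decide (p.2 < p.1)

/-- A double ascent: a sequence of distinct values with at most one consecutive
inversion. -/
def IsDoubleAscent (s : List ℕ) : Prop := s.Nodup ∧ descents s ≤ 1

/-- Two sequences are order-isomorphic (same length, same relative order of values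
position by position). -/
def OrdIso (s t : List ℕ) : Prop :=
  s.length = t.length ∧ ∀ i j, i < s.length → j < s.length →
    (s.getD i 0 < s.getD j 0 ↔ t.getD i 0 < t.getD j 0)

/-- Boolean version of `OrdIso`. -/
def ordIsoB (s t : List ℕ) : Bool :=
  (s.length == t.length) &&
    ((List.range s.length).all fun i => (List.range s.length).all fun j =>
      decide (s.getD i 0 < s.getD j 0) == decide (t.getD i 0 < t.getD j 0))

lemma ordIsoB_of_ordIso (s t : List ℕ) (h : OrdIso s t) : ordIsoB s t = true := by
  obtain ⟨h1, h2⟩ := h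
  simp only [ordIsoB, Bool.and_eq_true, beq_iff_eq, List.all_eq_true, List.mem_range]
  refine ⟨h1, fun i hi j hj => ?_⟩
  rw [decide_eq_decide]
  exact h2 i j hi hj

lemma self_insert (a : ℕ) : ∀ (l : List ℕ), a ∈ l →
    l = (l.erase a).insertIdx (l.idxOf a) a := by
  intro l hl
  induction l with
  | nil => simp at hl
  | cons b t ih =>
    by_cases hb : b = a
    · subst hb; simp
    · rw [List.erase_cons_tail (by simp [hb]), List.idxOf_cons_ne _ (by simpa using hb),
        List.insertIdx_succ_cons]
      rcases List.mem_cons.1 hl with h | h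
      · exact absurd h.symm hb
      · exact congrArg (b :: ·) (ih h)

lemma key2 : ∀ i < 6, ∀ j < 7,
    ordIsoB (((([0, 2, 1, 3, 4] : List ℕ).insertIdx i 5).insertIdx j 6).filter
      (fun v => decide (2 ≤ v))) [0, 1, 3, 4, 2] = true →
    (([0, 2, 1, 3, 4] : List ℕ).insertIdx i 5).insertIdx j 6 = [0, 2, 1, 3, 5, 6, 4] := by
  decide

/-- Double ascents are not a valid structure type: `13245` (0-indexed
`[0,2,1,3,4]`) and `12453` (0-indexed `[0,1,3,4,2]`) are double ascents; the top three
values of the former are order-isomorphic to the bottom three values of the latter;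
the unique permutation on 7 points combining them on this overlap of 3 values is
`1324675` (0-indexed `[0,2,1,3,5,6,4]`), which is not a double ascent. -/
theorem stmt17 :
    IsDoubleAscent [0, 2, 1, 3, 4] ∧
    IsDoubleAscent [0, 1, 3, 4, 2] ∧
    OrdIso (List.filter (fun v => decide (2 ≤ v)) [0, 2, 1, 3, 4])
      (List.filter (fun v => decide (v < 3)) [0, 1, 3, 4, 2]) ∧
    (∀ θ : List ℕ, θ.Perm (List.range 7) →
      θ.filter (fun v => decide (v < 5)) = [0, 2, 1, 3, 4] →
      OrdIso (θ.filter (fun v => decide (2 ≤ v))) [0, 1, 3, 4, 2] →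
      θ = [0, 2, 1, 3, 5, 6, 4]) ∧
    ¬ IsDoubleAscent [0, 2, 1, 3, 5, 6, 4] := by
  refine ⟨by constructor <;> decide, by constructor <;> decide, ?_, ?_, ?_⟩
  · have e1 : List.filter (fun v => decide (2 ≤ v)) [0, 2, 1, 3, 4] = [2, 3, 4] := by decide
    have e2 : List.filter (fun v => decide (v < 3)) [0, 1, 3, 4, 2] = [0, 1, 2] := by decide
    rw [e1, e2]
    refine ⟨rfl, fun i j hi hj => ?_⟩
    simp only [List.length_cons, List.length_nil] at hi hj
    interval_cases i <;> interval_cases j <;> decide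
  · intro θ hp h1 h2
    have hnd : θ.Nodup := hp.nodup_iff.mpr (List.nodup_range (n := 7))
    have hmem : ∀ v ∈ θ, v < 7 := fun v hv => List.mem_range.1 (hp.subset hv)
    have h6 : (6 : ℕ) ∈ θ := hp.mem_iff.2 (by decide)
    have h5 : (5 : ℕ) ∈ θ.erase 6 :=
      (List.mem_erase_of_ne (by decide)).2 (hp.mem_iff.2 (by decide))
    have hlen : θ.length = 7 := hp.length_eq.trans (by simp)
    have hnd6 : (θ.erase 6).Nodup := hnd.erase 6
    -- the bottom 5 values
    have hθ₅ : (θ.erase 6).erase 5 = [0, 2, 1, 3, 4] := by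
      rw [hnd6.erase_eq_filter, hnd.erase_eq_filter, List.filter_filter]
      rw [← h1]
      apply List.filter_congr
      intro v hv
      have := hmem v hv
      rw [Bool.eq_iff_iff]
      simp only [Bool.and_eq_true, decide_eq_true_eq, bne_iff_ne, ne_eq]
      omega
    have hi : (θ.erase 6).idxOf 5 < 6 := by
      have := List.idxOf_lt_length_iff.2 h5
      rwa [List.length_erase_of_mem h6, hlen] at this
    have hj : θ.idxOf 6 < 7 := by
      have := List.idxOf_lt_length_iff.2 h6
      rwa [hlen] at this
    have hform : θ = (([0, 2, 1, 3, 4] : List ℕ).insertIdx ((θ.erase 6).idxOf 5) 5).insertIdx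
        (θ.idxOf 6) 6 := by
      conv_lhs => rw [self_insert 6 θ h6, self_insert 5 (θ.erase 6) h5, hθ₅]
    rw [hform] at h2 ⊢
    exact key2 _ hi _ hj (ordIsoB_of_ordIso _ _ h2)
  · intro ⟨_, h⟩
    revert h; decide
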